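/- Let A ∈ ℤ^{d×n} of full rank, σ ⊆ {1,…,n} a simplex (|σ|=d, det(A_σ)≠0). For k ∈ ℤ^{n-d} define Λ_k := { k+m ∈ ℕ^{n-d} : A_{σ̄} m ∈ ℤ·A_σ }. Then: (a) {Λ_k : k ∈ ℤ^{n-d}} = {Λ_k : k ∈ ℕ^{n-d}}; (b) the number of distinct sets Λ_k equals the group index [ℤ·A : ℤ·A_σ]. -/

import Mathlib

open Matrix

/-- The subgroup of `ℤ^d` generated by the columns of an integer matrix. -/
def colSpanZ {d : ℕ} {ι : Type} (M : Matrix (Fin d) ι ℤ) : AddSubgroup (Fin d → ℤ) :=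
  AddSubgroup.closure (Set.range fun j => fun i => M i j)

/-- `Λ_k := { k+m ∈ ℕ^{n-d} : A_{σ̄} m ∈ ℤA_σ }`, with coordinates ordered so that
`σ` comes first and `A = (Aσ | Aτ)`. -/
def Lam {d e : ℕ} (Aσ : Matrix (Fin d) (Fin d) ℤ) (Aτ : Matrix (Fin d) (Fin e) ℤ)
    (k : Fin e → ℤ) : Set (Fin e → ℤ) :=
  {x | (∀ j, 0 ≤ x j) ∧ Aτ *ᵥ (x - k) ∈ colSpanZ Aσ}

lemma colSpanZ_eq {d e : ℕ} (M : Matrix (Fin d) (Fin e) ℤ) :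
    colSpanZ M = (LinearMap.range M.mulVecLin).toAddSubgroup := by
  unfold colSpanZ
  rw [Matrix.range_mulVecLin, ← Submodule.span_int_eq_addSubgroupClosure]
  rfl

lemma mem_colSpanZ_iff {d e : ℕ} (M : Matrix (Fin d) (Fin e) ℤ) (x : Fin d → ℤ) :
    x ∈ colSpanZ M ↔ ∃ v, M *ᵥ v = x := by
  rw [colSpanZ_eq]
  exact Iff.rfl

lemma mulVec_mem_colSpanZ {d e : ℕ} (M : Matrix (Fin d) (Fin e) ℤ) (v : Fin e → ℤ) :
    M *ᵥ v ∈ colSpanZ M := (mem_colSpanZ_iff M _).2 ⟨v, rfl⟩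

lemma det_smul_mem_colSpanZ {d : ℕ} (A : Matrix (Fin d) (Fin d) ℤ) (v : Fin d → ℤ) :
    A.det • v ∈ colSpanZ A := by
  have : A *ᵥ (A.adjugate *ᵥ v) = A.det • v := by
    rw [Matrix.mulVec_mulVec, Matrix.mul_adjugate, Matrix.smul_mulVec, Matrix.one_mulVec]
  exact this ▸ mulVec_mem_colSpanZ A _

/-- (a) The family of sets `Λ_k` for `k ∈ ℤ^{n-d}` coincides with the family for
`k ∈ ℕ^{n-d}`; (b) the number of distinct sets `Λ_k` equals `[ℤA : ℤA_σ]`. -/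
theorem stmt7 (d e : ℕ) (Aσ : Matrix (Fin d) (Fin d) ℤ) (Aτ : Matrix (Fin d) (Fin e) ℤ)
    (hdet : Aσ.det ≠ 0) :
    ({S | ∃ k : Fin e → ℤ, S = Lam Aσ Aτ k} =
      {S | ∃ k : Fin e → ℤ, (∀ j, 0 ≤ k j) ∧ S = Lam Aσ Aτ k}) ∧
    Set.ncard {S | ∃ k : Fin e → ℤ, S = Lam Aσ Aτ k} =
      (colSpanZ Aσ).relIndex (colSpanZ Aσ ⊔ colSpanZ Aτ) := by
  set H := colSpanZ Aσ with hH
  set N : ℤ := Aσ.det ^ 2 with hNdef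
  have hN : 1 ≤ N := by
    have : 0 < Aσ.det ^ 2 := by positivity
    omega
  have hNsmul : ∀ v : Fin d → ℤ, N • v ∈ H := by
    intro v
    have h1 : Aσ.det • v ∈ H := det_smul_mem_colSpanZ Aσ v
    have h2 : Aσ.det • (Aσ.det • v) ∈ H := AddSubgroup.zsmul_mem H h1 _
    have : N • v = Aσ.det • (Aσ.det • v) := by
      rw [smul_smul, hNdef, sq]
    rwa [this]
  -- every k has a nonnegative companion
  have exists_nonneg : ∀ k : Fin e → ℤ, ∃ k' : Fin e → ℤ,
      (∀ j, 0 ≤ k' j) ∧ Aτ *ᵥ (k' - k) ∈ H := by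
    intro k
    refine ⟨k + N • fun j => ((k j).natAbs : ℤ), ?_, ?_⟩
    · intro j
      have h1 : -k j ≤ ((k j).natAbs : ℤ) := by
        rw [← Int.abs_eq_natAbs]; exact neg_le_abs _
      have h2 : (0:ℤ) ≤ ((k j).natAbs : ℤ) := Int.natCast_nonneg _
      simp only [Pi.add_apply, Pi.smul_apply, smul_eq_mul]
      nlinarith
    · have : (k + N • fun j => ((k j).natAbs : ℤ)) - k = N • fun j => ((k j).natAbs : ℤ) := by
        abel
      rw [this, Matrix.mulVec_smul]
      exact hNsmul _
  have cond_iff : ∀ k k' x : Fin e → ℤ, Aτ *ᵥ (k' - k) ∈ H →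
      (Aτ *ᵥ (x - k) ∈ H ↔ Aτ *ᵥ (x - k') ∈ H) := by
    intro k k' x hkk
    have key : Aτ *ᵥ (x - k) = Aτ *ᵥ (x - k') + Aτ *ᵥ (k' - k) := by
      rw [← Matrix.mulVec_add, sub_add_sub_cancel]
    constructor
    · intro h
      have := AddSubgroup.sub_mem H h hkk
      rwa [key, add_sub_cancel_right] at this
    · intro h
      rw [key]; exact AddSubgroup.add_mem H h hkk
  have lam_eq_iff : ∀ k k' : Fin e → ℤ,
      Lam Aσ Aτ k = Lam Aσ Aτ k' ↔ Aτ *ᵥ (k' - k) ∈ H := by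
    intro k k'
    constructor
    · intro h
      obtain ⟨k'', hpos, hmem⟩ := exists_nonneg k
      have hk1 : k'' ∈ Lam Aσ Aτ k := ⟨hpos, hmem⟩
      rw [h] at hk1
      have hk2 : Aτ *ᵥ (k'' - k') ∈ H := hk1.2
      have : Aτ *ᵥ (k' - k) = Aτ *ᵥ (k'' - k) - Aτ *ᵥ (k'' - k') := by
        rw [← Matrix.mulVec_sub]
        congr 1
        abel
      rw [this]
      exact AddSubgroup.sub_mem H hmem hk2
    · intro h
      ext x
      exact and_congr_right fun _ => cond_iff k k' x h
  constructor
  · ext S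
    simp only [Set.mem_setOf_eq]
    constructor
    · rintro ⟨k, rfl⟩
      obtain ⟨k', hpos, hmem⟩ := exists_nonneg k
      exact ⟨k', hpos, (lam_eq_iff k k').2 hmem⟩
    · rintro ⟨k, -, rfl⟩
      exact ⟨k, rfl⟩
  · -- cardinality
    set T := colSpanZ Aτ with hT
    set K := H ⊔ T with hKdef
    have hK : ∀ k : Fin e → ℤ, Aτ *ᵥ k ∈ K :=
      fun k => AddSubgroup.mem_sup_right (mulVec_mem_colSpanZ Aτ k)
    set φ : (Fin e → ℤ) → (↥K ⧸ H.addSubgroupOf K) :=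
      fun k => QuotientAddGroup.mk ⟨Aτ *ᵥ k, hK k⟩ with hφdef
    have hφ : ∀ k k' : Fin e → ℤ, φ k = φ k' ↔ Aτ *ᵥ (k' - k) ∈ H := by
      intro k k'
      rw [hφdef]
      simp only [QuotientAddGroup.eq, AddSubgroup.mem_addSubgroupOf]
      have : ((-(⟨Aτ *ᵥ k, hK k⟩ : ↥K) + ⟨Aτ *ᵥ k', hK k'⟩ : ↥K) : Fin d → ℤ)
          = Aτ *ᵥ (k' - k) := by
        push_cast
        rw [Matrix.mulVec_sub]
        abel
      rw [this]
    set 𝒮 : Set (Set (Fin e → ℤ)) := {S | ∃ k : Fin e → ℤ, S = Lam Aσ Aτ k} with h𝒮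
    have hmem𝒮 : ∀ s : 𝒮, ∃ k, (s : Set (Fin e → ℤ)) = Lam Aσ Aτ k := fun s => s.2
    classical
    set F : 𝒮 → (↥K ⧸ H.addSubgroupOf K) := fun s => φ (hmem𝒮 s).choose with hF
    have hbij : Function.Bijective F := by
      constructor
      · intro s1 s2 h
        have h1 := (hmem𝒮 s1).choose_spec
        have h2 := (hmem𝒮 s2).choose_spec
        rw [hF] at h
        have := (hφ _ _).1 h
        have := (lam_eq_iff _ _).2 this
        apply Subtype.ext
        rw [h1, h2, this]
      · intro q
        obtain ⟨⟨w, hw⟩, rfl⟩ := QuotientAddGroup.mk_surjective q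
        rw [hKdef] at hw
        obtain ⟨y, hy, z, hz, hyz⟩ := AddSubgroup.mem_sup.1 hw
        obtain ⟨v, rfl⟩ := (mem_colSpanZ_iff Aτ z).1 hz
        refine ⟨⟨Lam Aσ Aτ v, ⟨v, rfl⟩⟩, ?_⟩
        have hc := (hmem𝒮 ⟨Lam Aσ Aτ v, ⟨v, rfl⟩⟩).choose_spec
        have h1 : φ (hmem𝒮 ⟨Lam Aσ Aτ v, ⟨v, rfl⟩⟩).choose = φ v := by
          rw [hφ]
          have := (lam_eq_iff _ v).1 hc.symm
          exact this
        rw [hF]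
        simp only
        rw [h1, hφdef]
        simp only [QuotientAddGroup.eq, AddSubgroup.mem_addSubgroupOf]
        have : ((-(⟨Aτ *ᵥ v, hK v⟩ : ↥K) + ⟨w, hw⟩ : ↥K) : Fin d → ℤ) = y := by
          push_cast
          rw [← hyz]
          abel
        rw [this]
        exact hy
    have : Set.ncard 𝒮 = Nat.card (↥K ⧸ H.addSubgroupOf K) := by
      rw [← Nat.card_coe_set_eq, Nat.card_eq_of_bijective F hbij]
    rw [this]
    rfl
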